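/- Let μ be a centered, compactly supported Borel probability measure on ℝ that is not a Dirac mass, and let μ̂ be a Nevanlinna measure for μ. Let E ∈ ℝ be an atom of μ, i.e. μ({E}) > 0, and let (ω_n) be a sequence in ℂ⁺ converging to E non-tangentially, i.e. ω_n → E and sup_n |Re ω_n − E| / Im ω_n < ∞. Then I_{μ̂}(ω_n) → 1/μ({E}) − 1 as n → ∞. -/

import Mathlib

open MeasureTheory Complex Set Filter Topology

noncomputable section

/-- Cauchy–Stieltjes transform `m_μ(z) = ∫ (x − z)⁻¹ dμ(x)`. -/
def mTr (μ : Measure ℝ) (z : ℂ) : ℂ := ∫ x, ((x : ℂ) - z)⁻¹ ∂μ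

/-- Negative reciprocal Cauchy–Stieltjes transform `F_μ(z) = −1/m_μ(z)`. -/
def FTr (μ : Measure ℝ) (z : ℂ) : ℂ := -(mTr μ z)⁻¹

/-- `I_ν(ω) = ∫ |x − ω|⁻² dν(x)`. -/
def Inu (ν : Measure ℝ) (ω : ℂ) : ℝ := ∫ x, (Complex.normSq ((x : ℂ) - ω))⁻¹ ∂ν

/-- Topological support of a Borel measure on ℝ. -/
def msupport (μ : Measure ℝ) : Set ℝ := {x | ∀ U : Set ℝ, IsOpen U → x ∈ U → 0 < μ U}

/-- `μh` is a Nevanlinna measure for the (centered) measure `μ`: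
a finite Borel measure with `F_μ(ω) − ω = ∫ (x − ω)⁻¹ dμh(x)` on ℂ⁺. -/
def IsNevanlinna (μ μh : Measure ℝ) : Prop :=
  IsFiniteMeasure μh ∧ ∀ ω : ℂ, 0 < ω.im → FTr μ ω - ω = ∫ x, ((x : ℂ) - ω)⁻¹ ∂μh

/-- Subordination function for `μ` at time `t`. -/
structure IsSubordination (μ : Measure ℝ) (t : ℝ) (ω : ℂ → ℂ) : Prop where
  contOn : ContinuousOn ω {z : ℂ | 0 ≤ z.im}
  mapsTo : ∀ z : ℂ, 0 ≤ z.im → 0 ≤ (ω z).im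
  diff : DifferentiableOn ℂ ω {z : ℂ | 0 < z.im}
  im_ge : ∀ z : ℂ, 0 < z.im → z.im ≤ (ω z).im
  subord : ∀ z : ℂ, 0 < z.im → (t : ℂ) * ω z - z = ((t - 1 : ℝ) : ℂ) * FTr μ (ω z)

/-- `ν = μ^{⊞t}`, the free convolution power associated with the subordination function `ω`. -/
def IsFreePower (μ : Measure ℝ) (t : ℝ) (ω : ℂ → ℂ) (ν : Measure ℝ) : Prop :=
  IsProbabilityMeasure ν ∧ ∀ z : ℂ, 0 < z.im → mTr ν z = mTr μ (ω z)

/-- Subordination functions for the pair `(μa, μb)`. -/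
structure IsPairSubordination (μa μb : Measure ℝ) (ωa ωb : ℂ → ℂ) : Prop where
  diff_a : DifferentiableOn ℂ ωa {z : ℂ | 0 < z.im}
  diff_b : DifferentiableOn ℂ ωb {z : ℂ | 0 < z.im}
  im_a : ∀ z : ℂ, 0 < z.im → z.im ≤ (ωa z).im
  im_b : ∀ z : ℂ, 0 < z.im → z.im ≤ (ωb z).im
  lim_a : Tendsto (fun η : ℝ => ωa (η * Complex.I) / (η * Complex.I)) atTop (nhds 1)
  lim_b : Tendsto (fun η : ℝ => ωb (η * Complex.I) / (η * Complex.I)) atTop (nhds 1)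
  eq_a : ∀ z : ℂ, 0 < z.im → ωa z + ωb z - z = FTr μa (ωb z)
  eq_b : ∀ z : ℂ, 0 < z.im → ωa z + ωb z - z = FTr μb (ωa z)

/-- `ν = μa ⊞ μb`, the free additive convolution. -/
def IsFreeConv (μa μb : Measure ℝ) (ωb : ℂ → ℂ) (ν : Measure ℝ) : Prop :=
  IsProbabilityMeasure ν ∧ ∀ z : ℂ, 0 < z.im → mTr ν z = mTr μa (ωb z)

/-- Assumption 1 of the paper: `μ` is a centered, compactly supported probability
measure whose singular part consists of finitely many atoms and whose absolutely
continuous part has a density `ρ` of Jacobi type, supported on finitely many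
disjoint compact intervals with power-law behavior (exponents in `(−1,1)`). -/
structure JacobiData (μ : Measure ℝ) where
  ρ : ℝ → ℝ
  n : ℕ
  npos : 0 < n
  Em : Fin n → ℝ
  Ep : Fin n → ℝ
  βm : Fin n → ℝ
  βp : Fin n → ℝ
  Cj : Fin n → ℝ
  atoms : Finset ℝ
  w : ℝ → ℝ
  prob : IsProbabilityMeasure μ
  compactSupp : ∃ K : Set ℝ, IsCompact K ∧ μ Kᶜ = 0
  centered : ∫ x, x ∂μ = 0
  lt : ∀ j, Em j < Ep j
  disj : ∀ i j, i ≠ j → Disjoint (Set.Icc (Em i) (Ep i)) (Set.Icc (Em j) (Ep j))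
  βm_mem : ∀ j, βm j ∈ Set.Ioo (-1 : ℝ) 1
  βp_mem : ∀ j, βp j ∈ Set.Ioo (-1 : ℝ) 1
  Cj_ge : ∀ j, 1 ≤ Cj j
  ρ_nonneg : ∀ x, 0 ≤ ρ x
  ρ_supp : ∀ x, x ∉ ⋃ j, Set.Icc (Em j) (Ep j) → ρ x = 0
  powerLaw : ∀ j, ∀ᵐ E ∂(volume.restrict (Set.Icc (Em j) (Ep j))),
      (Cj j)⁻¹ * ((E - Em j) ^ (βm j) * (Ep j - E) ^ (βp j)) ≤ ρ E ∧
      ρ E ≤ Cj j * ((E - Em j) ^ (βm j) * (Ep j - E) ^ (βp j))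
  w_nonneg : ∀ a, 0 ≤ w a
  decomp : μ = volume.withDensity (fun x => ENNReal.ofReal (ρ x))
      + ∑ a ∈ atoms, ENNReal.ofReal (w a) • Measure.dirac a

/-- The support of the absolutely continuous part of `μ`. -/
def JacobiData.acSupport {μ : Measure ℝ} (d : JacobiData μ) : Set ℝ :=
  ⋃ j, Set.Icc (d.Em j) (d.Ep j)

/-- The Hölder condition (5.1)/(2.8) of the paper on the density of `μ_ac`. -/
def JacobiData.HolderCond {μ : Measure ℝ} (d : JacobiData μ) : Prop :=
  ∀ j, ∃ L γ : NNReal, 0 < γ ∧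
    HolderOnWith L γ
      (fun E => d.ρ E / ((E - d.Em j) ^ (d.βm j) * (d.Ep j - E) ^ (d.βp j)))
      (Set.Icc (d.Em j) (d.Ep j))

/-- Assumption 2 of the paper: a centered, absolutely continuous probability measure
supported on finitely many disjoint compact intervals, with density of Jacobi type. -/
structure AbsJacobiData (μ : Measure ℝ) where
  ρ : ℝ → ℝ
  n : ℕ
  npos : 0 < n
  Am : Fin n → ℝ
  Ap : Fin n → ℝ
  sm : Fin n → ℝ
  sp : Fin n → ℝ
  Cj : Fin n → ℝ
  prob : IsProbabilityMeasure μ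
  centered : ∫ x, x ∂μ = 0
  lt : ∀ j, Am j < Ap j
  disj : ∀ i j, i ≠ j → Disjoint (Set.Icc (Am i) (Ap i)) (Set.Icc (Am j) (Ap j))
  sm_mem : ∀ j, sm j ∈ Set.Ioo (-1 : ℝ) 1
  sp_mem : ∀ j, sp j ∈ Set.Ioo (-1 : ℝ) 1
  Cj_ge : ∀ j, 1 ≤ Cj j
  ρ_nonneg : ∀ x, 0 ≤ ρ x
  ρ_supp : ∀ x, x ∉ ⋃ j, Set.Icc (Am j) (Ap j) → ρ x = 0
  powerLaw : ∀ j, ∀ᵐ E ∂(volume.restrict (Set.Icc (Am j) (Ap j))),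
      (Cj j)⁻¹ * ((E - Am j) ^ (sm j) * (Ap j - E) ^ (sp j)) ≤ ρ E ∧
      ρ E ≤ Cj j * ((E - Am j) ^ (sm j) * (Ap j - E) ^ (sp j))
  decomp : μ = volume.withDensity (fun x => ENNReal.ofReal (ρ x))


lemma sub_ofReal_ne (ω : ℂ) (hω : ω.im ≠ 0) (x : ℝ) : ((x : ℂ) - ω) ≠ 0 := by
  intro h
  have h2 := congrArg Complex.im h
  simp only [Complex.sub_im, Complex.ofReal_im, Complex.zero_im, zero_sub, neg_eq_zero] at h2
  exact hω h2

lemma normSq_sub_pos (ω : ℂ) (hω : ω.im ≠ 0) (x : ℝ) : 0 < Complex.normSq ((x : ℂ) - ω) :=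
  Complex.normSq_pos.mpr (sub_ofReal_ne ω hω x)

lemma integrable_inv_sub (ν : Measure ℝ) [IsFiniteMeasure ν] (ω : ℂ) (hω : 0 < ω.im) :
    Integrable (fun x : ℝ => ((x : ℂ) - ω)⁻¹) ν := by
  have hm : AEStronglyMeasurable (fun x : ℝ => ((x : ℂ) - ω)⁻¹) ν :=
    ((Complex.continuous_ofReal.sub continuous_const).inv₀
      (fun x => sub_ofReal_ne ω hω.ne' x)).aestronglyMeasurable
  refine (integrable_const (ω.im)⁻¹).mono' hm (Filter.Eventually.of_forall fun x => ?_)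
  rw [norm_inv]
  have h1 : ω.im ≤ ‖(x : ℂ) - ω‖ := by
    have h2 := Complex.abs_im_le_norm ((x : ℂ) - ω)
    simp only [Complex.sub_im, Complex.ofReal_im, zero_sub, abs_neg] at h2 ⊢
    exact (le_abs_self _).trans h2
  gcongr

lemma integrable_invNormSq (ν : Measure ℝ) [IsFiniteMeasure ν] (ω : ℂ) (hω : 0 < ω.im) :
    Integrable (fun x : ℝ => (Complex.normSq ((x : ℂ) - ω))⁻¹) ν := by
  have hm : AEStronglyMeasurable (fun x : ℝ => (Complex.normSq ((x : ℂ) - ω))⁻¹) ν :=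
    ((Complex.continuous_normSq.comp (Complex.continuous_ofReal.sub continuous_const)).inv₀
      (fun x => (normSq_sub_pos ω hω.ne' x).ne')).aestronglyMeasurable
  refine (integrable_const ((ω.im ^ 2)⁻¹)).mono' hm (Filter.Eventually.of_forall fun x => ?_)
  rw [Real.norm_eq_abs, _root_.abs_of_nonneg (inv_nonneg.2 (Complex.normSq_nonneg _))]
  have h1 : ω.im ^ 2 ≤ Complex.normSq ((x : ℂ) - ω) := by
    have h3 : ((x : ℂ) - ω).im = -ω.im := by simp
    rw [Complex.normSq_apply, h3]
    nlinarith [sq_nonneg ((x : ℂ) - ω).re]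
  gcongr

lemma im_integral (ν : Measure ℝ) [IsFiniteMeasure ν] (ω : ℂ) (hω : 0 < ω.im) :
    (∫ x, ((x : ℂ) - ω)⁻¹ ∂ν).im = ω.im * Inu ν ω := by
  rw [← RCLike.im_eq_complex_im, ← integral_im (integrable_inv_sub ν ω hω)]
  rw [RCLike.im_eq_complex_im]
  unfold Inu
  rw [← integral_const_mul]
  refine integral_congr_ae (Filter.Eventually.of_forall fun x => ?_)
  show ((x : ℂ) - ω)⁻¹.im = ω.im * (Complex.normSq ((x : ℂ) - ω))⁻¹
  rw [Complex.inv_im]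
  simp only [Complex.sub_im, Complex.ofReal_im, zero_sub, neg_neg, div_eq_mul_inv]

lemma Inu_eq (μ μh : Measure ℝ) [IsProbabilityMeasure μ] (hNev : IsNevanlinna μ μh)
    (ω : ℂ) (hω : 0 < ω.im) :
    Inu μh ω = Inu μ ω / Complex.normSq (mTr μ ω) - 1 := by
  haveI := hNev.1
  have h2 : (FTr μ ω - ω).im = ω.im * Inu μh ω := by
    rw [hNev.2 ω hω]; exact im_integral μh ω hω
  have h3 : (mTr μ ω).im = ω.im * Inu μ ω := im_integral μ ω hω
  have h4 : (FTr μ ω).im = ω.im * (Inu μ ω / Complex.normSq (mTr μ ω)) := by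
    unfold FTr
    rw [Complex.neg_im, Complex.inv_im, h3]
    ring
  have h5 : (FTr μ ω - ω).im = (FTr μ ω).im - ω.im := by simp
  rw [h5, h4] at h2
  have h6 : ω.im * Inu μh ω = ω.im * (Inu μ ω / Complex.normSq (mTr μ ω) - 1) := by
    rw [mul_sub, mul_one, ← h2]
  exact mul_left_cancel₀ hω.ne' h6

/-- along any sequence converging non-tangentially to an atom `E` of `μ`,
`I_{μ̂}(ω_n) → 1/μ({E}) − 1`. -/
theorem statement6 (μ : Measure ℝ) (hprob : IsProbabilityMeasure μ)
    (hcpt : ∃ K : Set ℝ, IsCompact K ∧ μ Kᶜ = 0)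
    (hcent : ∫ x, x ∂μ = 0)
    (hnd : ∀ a : ℝ, μ ≠ Measure.dirac a)
    (μh : Measure ℝ) (hNev : IsNevanlinna μ μh)
    (E : ℝ) (hatom : 0 < μ {E})
    (ωn : ℕ → ℂ) (him : ∀ n, 0 < (ωn n).im)
    (hlim : Tendsto ωn atTop (nhds (E : ℂ)))
    (hnontang : ∃ C : ℝ, ∀ n, |(ωn n).re - E| / (ωn n).im ≤ C) :
    Tendsto (fun n => Inu μh (ωn n)) atTop (nhds (1 / (μ {E}).toReal - 1)) := by
  haveI := hprob
  haveI := hNev.1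
  obtain ⟨C₀, hC₀⟩ := hnontang
  set C := max C₀ 0 with hCdef
  have hC0 : 0 ≤ C := le_max_right _ _
  have hC : ∀ n, |(ωn n).re - E| ≤ C * (ωn n).im := by
    intro n
    have hb := him n
    have h : |(ωn n).re - E| / (ωn n).im ≤ C := (hC₀ n).trans (le_max_left _ _)
    calc |(ωn n).re - E| = |(ωn n).re - E| / (ωn n).im * (ωn n).im := by field_simp
    _ ≤ C * (ωn n).im := mul_le_mul_of_nonneg_right h hb.le
  set μE := (μ {E}).toReal with hμE
  have hμEpos : 0 < μE := ENNReal.toReal_pos hatom.ne' (measure_ne_top μ _)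
  have hEomega : ∀ n, ((E : ℂ) - ωn n) ≠ 0 := by
    intro n h
    have h2 := congrArg Complex.im h
    simp only [Complex.sub_im, Complex.ofReal_im, Complex.zero_im, zero_sub, neg_eq_zero] at h2
    exact (him n).ne' h2
  have hbound : ∀ n, ∀ x : ℝ,
      Complex.normSq ((E : ℂ) - ωn n) ≤ (1 + C ^ 2) * Complex.normSq ((x : ℂ) - ωn n) := by
    intro n x
    have h1 := hC n
    have hb := him n
    have e1 : Complex.normSq ((E : ℂ) - ωn n) = ((ωn n).re - E) ^ 2 + (ωn n).im ^ 2 := by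
      rw [Complex.normSq_apply]
      simp only [Complex.sub_re, Complex.sub_im, Complex.ofReal_re, Complex.ofReal_im, zero_sub]
      ring
    have e2 : (ωn n).im ^ 2 ≤ Complex.normSq ((x : ℂ) - ωn n) := by
      have h3 : ((x : ℂ) - ωn n).im = -(ωn n).im := by simp
      rw [Complex.normSq_apply, h3]
      nlinarith [sq_nonneg ((x : ℂ) - ωn n).re]
    have h2 : ((ωn n).re - E) ^ 2 ≤ C ^ 2 * (ωn n).im ^ 2 := by
      have h4 : ((ωn n).re - E) ^ 2 = |(ωn n).re - E| ^ 2 := (_root_.sq_abs _).symm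
      nlinarith [abs_nonneg ((ωn n).re - E), mul_nonneg hC0 hb.le]
    nlinarith [sq_nonneg C]
  have htendsub : Tendsto (fun n => (E : ℂ) - ωn n) atTop (𝓝 0) := by
    have := (tendsto_const_nhds (x := (E : ℂ)) (f := atTop)).sub hlim
    simpa using this
  -- Claim B
  have hB : Tendsto (fun n => ((E : ℂ) - ωn n) * mTr μ (ωn n)) atTop (𝓝 (μE : ℂ)) := by
    have hint : ∀ n, ((E : ℂ) - ωn n) * mTr μ (ωn n)
        = ∫ x, ((E : ℂ) - ωn n) * ((x : ℂ) - ωn n)⁻¹ ∂μ := fun n => (integral_const_mul _ _).symm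
    have hlimint : Tendsto (fun n => ∫ x, ((E : ℂ) - ωn n) * ((x : ℂ) - ωn n)⁻¹ ∂μ) atTop
        (𝓝 (∫ x, Set.indicator {E} (fun _ => (1 : ℂ)) x ∂μ)) := by
      apply tendsto_integral_of_dominated_convergence (fun _ => Real.sqrt (1 + C ^ 2))
      · intro n
        exact (continuous_const.mul ((Complex.continuous_ofReal.sub continuous_const).inv₀
          (fun x => sub_ofReal_ne _ (him n).ne' x))).aestronglyMeasurable
      · exact integrable_const _
      · intro n
        refine Filter.Eventually.of_forall fun x => ?_
        rw [norm_mul, norm_inv, ← div_eq_mul_inv,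
          div_le_iff₀ (norm_pos_iff.mpr (sub_ofReal_ne _ (him n).ne' x))]
        have hb2 : ‖(E : ℂ) - ωn n‖ ^ 2 ≤ (Real.sqrt (1 + C ^ 2) * ‖(x : ℂ) - ωn n‖) ^ 2 := by
          rw [mul_pow, Real.sq_sqrt (by positivity)]
          have := hbound n x
          rw [Complex.sq_norm, Complex.sq_norm]
          exact this
        have := Real.sqrt_le_sqrt hb2
        rwa [Real.sqrt_sq (norm_nonneg _), Real.sqrt_sq (by positivity)] at this
      · refine Filter.Eventually.of_forall fun x => ?_
        by_cases hx : x = E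
        · subst hx
          have hone : ∀ n, ((x : ℂ) - ωn n) * ((x : ℂ) - ωn n)⁻¹ = 1 :=
            fun n => mul_inv_cancel₀ (hEomega n)
          rw [Set.indicator_of_mem (Set.mem_singleton x)]
          simpa [hone] using (tendsto_const_nhds : Tendsto (fun _ : ℕ => (1:ℂ)) atTop (𝓝 1))
        · rw [Set.indicator_of_notMem (fun h => hx (Set.mem_singleton_iff.mp h))]
          have hx0 : ((x : ℂ) - (E : ℂ)) ≠ 0 := by
            rw [sub_ne_zero]
            exact_mod_cast hx
          have h1 : Tendsto (fun n => ((x : ℂ) - ωn n)) atTop (𝓝 ((x : ℂ) - E)) :=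
            tendsto_const_nhds.sub hlim
          have := htendsub.mul ((h1.inv₀ hx0))
          simpa using this
    rw [integral_indicator_const (1 : ℂ) (measurableSet_singleton E)] at hlimint
    simp only [Complex.real_smul, mul_one] at hlimint
    rw [funext hint]
    exact hlimint
  -- Claim A
  have hA : Tendsto (fun n => Complex.normSq ((E : ℂ) - ωn n) * Inu μ (ωn n)) atTop (𝓝 μE) := by
    have hint : ∀ n, Complex.normSq ((E : ℂ) - ωn n) * Inu μ (ωn n)
        = ∫ x, Complex.normSq ((E : ℂ) - ωn n) * (Complex.normSq ((x : ℂ) - ωn n))⁻¹ ∂μ :=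
      fun n => (integral_const_mul _ _).symm
    have hlimint : Tendsto
        (fun n => ∫ x, Complex.normSq ((E : ℂ) - ωn n) * (Complex.normSq ((x : ℂ) - ωn n))⁻¹ ∂μ)
        atTop (𝓝 (∫ x, Set.indicator {E} (fun _ => (1 : ℝ)) x ∂μ)) := by
      apply tendsto_integral_of_dominated_convergence (fun _ => 1 + C ^ 2)
      · intro n
        exact (continuous_const.mul
          ((Complex.continuous_normSq.comp (Complex.continuous_ofReal.sub continuous_const)).inv₀
            (fun x => (normSq_sub_pos (ωn n) (him n).ne' x).ne'))).aestronglyMeasurable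
      · exact integrable_const _
      · intro n
        refine Filter.Eventually.of_forall fun x => ?_
        have hd := normSq_sub_pos (ωn n) (him n).ne' x
        rw [Real.norm_eq_abs, _root_.abs_of_nonneg
          (mul_nonneg (Complex.normSq_nonneg _) (inv_nonneg.2 hd.le)),
          ← div_eq_mul_inv, div_le_iff₀ hd]
        exact hbound n x
      · refine Filter.Eventually.of_forall fun x => ?_
        by_cases hx : x = E
        · subst hx
          have hone : ∀ n, Complex.normSq ((x : ℂ) - ωn n)
              * (Complex.normSq ((x : ℂ) - ωn n))⁻¹ = 1 :=
            fun n => mul_inv_cancel₀ (normSq_sub_pos (ωn n) (him n).ne' x).ne'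
          rw [Set.indicator_of_mem (Set.mem_singleton x)]
          simpa [hone] using (tendsto_const_nhds : Tendsto (fun _ : ℕ => (1:ℝ)) atTop (𝓝 1))
        · rw [Set.indicator_of_notMem (fun h => hx (Set.mem_singleton_iff.mp h))]
          have hx0 : Complex.normSq ((x : ℂ) - (E : ℂ)) ≠ 0 := by
            refine (Complex.normSq_pos.mpr ?_).ne'
            rw [sub_ne_zero]
            exact_mod_cast hx
          have h1 : Tendsto (fun n => Complex.normSq ((x : ℂ) - ωn n)) atTop
              (𝓝 (Complex.normSq ((x : ℂ) - E))) :=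
            (Complex.continuous_normSq.tendsto _).comp (tendsto_const_nhds.sub hlim)
          have h2 : Tendsto (fun n => Complex.normSq ((E : ℂ) - ωn n)) atTop
              (𝓝 (Complex.normSq 0)) :=
            (Complex.continuous_normSq.tendsto _).comp htendsub
          have := h2.mul (h1.inv₀ hx0)
          simpa using this
    rw [integral_indicator_const (1 : ℝ) (measurableSet_singleton E)] at hlimint
    simp only [smul_eq_mul, mul_one] at hlimint
    rw [funext hint]
    exact hlimint
  -- denominator
  have hB2 : Tendsto (fun n => Complex.normSq ((E : ℂ) - ωn n) * Complex.normSq (mTr μ (ωn n)))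
      atTop (𝓝 (μE * μE)) := by
    have := (Complex.continuous_normSq.tendsto _).comp hB
    simp only [Function.comp_def, Complex.normSq_mul, Complex.normSq_ofReal] at this
    exact this
  have heq : ∀ n, Inu μh (ωn n) =
      (Complex.normSq ((E : ℂ) - ωn n) * Inu μ (ωn n))
        / (Complex.normSq ((E : ℂ) - ωn n) * Complex.normSq (mTr μ (ωn n))) - 1 := by
    intro n
    rw [Inu_eq μ μh hNev (ωn n) (him n),
      mul_div_mul_left _ _ (Complex.normSq_pos.mpr (hEomega n)).ne']
  have hfin : Tendsto (fun n =>
      (Complex.normSq ((E : ℂ) - ωn n) * Inu μ (ωn n))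
        / (Complex.normSq ((E : ℂ) - ωn n) * Complex.normSq (mTr μ (ωn n))) - 1)
      atTop (𝓝 (μE / (μE * μE) - 1)) :=
    (hA.div hB2 (by positivity)).sub_const 1
  have hratio : μE / (μE * μE) = 1 / μE := by
    field_simp
  rw [funext heq]
  rw [show (1 / (μ {E}).toReal - 1) = μE / (μE * μE) - 1 by rw [hratio, hμE]]
  exact hfin


end
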